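/- Let g(m,x) denote the sum over all x-element subsets Ŝ of c servers of max(n_{i,Ŝ}−1,0)·max(n_{j,Ŝ}−1,0) where jobs a_i, a_j are each assigned to exactly r servers and are jointly assigned to exactly m common servers. Then g(m+1,x) − g(m,x) = C(c−2, x−1) − 2·C(c−r−1, x−1) + C(c−2r+m, x−1). -/

import Mathlib

/-- Binomial coefficient `C(a,b)` on integers, with the convention that it is
zero when `b < 0` or `b > a`. -/
def ch (a b : ℤ) : ℤ := if 0 ≤ b ∧ b ≤ a then ((a.toNat).choose b.toNat : ℤ) else 0

lemma ch_natCast (a b : ℕ) : ch (a : ℤ) (b : ℤ) = (a.choose b : ℤ) := by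
  unfold ch
  split_ifs with h
  · simp
  · rw [Nat.choose_eq_zero_of_lt (by omega)]
    simp

lemma ch_neg (a b : ℤ) (h : b < 0) : ch a b = 0 := by
  unfold ch; rw [if_neg (by omega)]

lemma ch_pascal (n k : ℤ) (hn : 0 ≤ n) :
    ch (n + 1) (k + 1) = ch n k + ch n (k + 1) := by
  obtain ⟨a, rfl⟩ := Int.eq_ofNat_of_zero_le hn
  rcases lt_or_ge k 0 with hk | hk
  · rcases eq_or_lt_of_le (by omega : k ≤ -1) with h1 | h1
    · subst h1
      rw [ch_neg (a:ℤ) (-1) (by norm_num), neg_add_cancel]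
      simp [ch]
      omega
    · rw [ch_neg _ _ (by omega), ch_neg _ _ (by omega), ch_neg _ _ (by omega)]; ring
  · obtain ⟨b, rfl⟩ := Int.eq_ofNat_of_zero_le hk
    have h1 : ((a:ℤ) + 1) = ((a+1 : ℕ) : ℤ) := by push_cast; ring
    have h2 : ((b:ℤ) + 1) = ((b+1 : ℕ) : ℤ) := by push_cast; ring
    rw [h1, h2, ch_natCast, ch_natCast, ch_natCast, Nat.choose_succ_succ]
    push_cast; ring

lemma count_sup {α : Type*} [DecidableEq α] (u t : Finset α) (ht : t ⊆ u) (x : ℕ) :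
    ((((Finset.powersetCard x u)).filter (fun s => t ⊆ s)).card : ℤ)
      = ch ((u.card : ℤ) - t.card) ((x : ℤ) - t.card) := by
  rcases lt_or_ge x t.card with hx | hx
  · rw [Finset.filter_false_of_mem, Finset.card_empty, ch_neg _ _ (by omega)]
    norm_num
    intro s hs hts
    rw [Finset.mem_powersetCard] at hs
    have := Finset.card_le_card hts
    omega
  · have htu : t.card ≤ u.card := Finset.card_le_card ht
    rw [show ((u.card:ℤ) - t.card) = ((u.card - t.card : ℕ):ℤ) by omega,
        show ((x:ℤ) - t.card) = ((x - t.card : ℕ):ℤ) by omega, ch_natCast]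
    rw [← Finset.card_sdiff_of_subset ht, ← Finset.card_powersetCard (x - t.card) (u \ t)]
    norm_cast
    apply Finset.card_bij' (fun s _ => s \ t) (fun s _ => s ∪ t)
    · intro s hs
      simp only [Finset.mem_filter, Finset.mem_powersetCard] at hs ⊢
      exact ⟨Finset.sdiff_subset_sdiff hs.1.1 le_rfl,
        by rw [Finset.card_sdiff_of_subset hs.2, hs.1.2]⟩
    · intro s hs
      simp only [Finset.mem_filter, Finset.mem_powersetCard, Finset.mem_sdiff] at hs ⊢
      have hdisj : Disjoint s t := Finset.disjoint_left.2 fun a has hat =>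
        ((Finset.mem_sdiff.1 (hs.1 has)).2 hat)
      refine ⟨⟨Finset.union_subset (hs.1.trans Finset.sdiff_subset) ht, ?_⟩,
        Finset.subset_union_right⟩
      rw [Finset.card_union_of_disjoint hdisj, hs.2]
      omega
    · intro s hs
      simp only [Finset.mem_filter] at hs
      exact Finset.sdiff_union_of_subset hs.2
    · intro s hs
      simp only [Finset.mem_powersetCard] at hs
      have hdisj : Disjoint s t := Finset.disjoint_left.2 fun a has hat =>
        ((Finset.mem_sdiff.1 (hs.1 has)).2 hat)
      exact Finset.union_sdiff_cancel_right hdisj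

lemma inter_empty_iff_subset_compl {α : Type*} [Fintype α] [DecidableEq α]
    (T S : Finset α) : T ∩ S = ∅ ↔ S ⊆ Tᶜ := by
  rw [← Finset.disjoint_iff_inter_eq_empty, disjoint_comm, ← le_compl_iff_disjoint_right]

lemma count_disj {α : Type*} [Fintype α] [DecidableEq α] (T : Finset α) (x : ℕ) :
    (((Finset.powersetCard x (Finset.univ : Finset α)).filter
        (fun S => T ∩ S = ∅)).card : ℤ)
      = ch ((Fintype.card α : ℤ) - T.card) (x : ℤ) := by
  have he : (Finset.powersetCard x (Finset.univ : Finset α)).filter (fun S => T ∩ S = ∅)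
      = Finset.powersetCard x Tᶜ := by
    ext S
    simp [Finset.mem_powersetCard, inter_empty_iff_subset_compl, and_comm]
  rw [he, Finset.card_powersetCard, Finset.card_compl]
  have : T.card ≤ Fintype.card α := T.card_le_univ
  rw [show ((Fintype.card α : ℤ) - T.card) = ((Fintype.card α - T.card : ℕ) : ℤ) by omega,
    ch_natCast]

lemma count_mem_disj {α : Type*} [Fintype α] [DecidableEq α] (i : α) (B : Finset α)
    (x : ℕ) (hi : i ∉ B) :
    (((Finset.powersetCard x (Finset.univ : Finset α)).filter
        (fun S => i ∈ S ∧ B ∩ S = ∅)).card : ℤ)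
      = ch ((Fintype.card α : ℤ) - B.card - 1) ((x : ℤ) - 1) := by
  have he : (Finset.powersetCard x (Finset.univ : Finset α)).filter
        (fun S => i ∈ S ∧ B ∩ S = ∅)
      = (Finset.powersetCard x Bᶜ).filter (fun S => {i} ⊆ S) := by
    ext S
    simp only [Finset.mem_filter, Finset.mem_powersetCard, Finset.subset_univ, true_and,
      inter_empty_iff_subset_compl, Finset.singleton_subset_iff]
    tauto
  rw [he, count_sup Bᶜ {i} (Finset.singleton_subset_iff.2 (Finset.mem_compl.2 hi)) x,
    Finset.card_compl, Finset.card_singleton]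
  have : B.card ≤ Fintype.card α := B.card_le_univ
  rw [show ((Fintype.card α - B.card : ℕ) : ℤ) = (Fintype.card α : ℤ) - B.card by omega]
  norm_num

lemma card_inter_eq_sum {c : ℕ} (T S : Finset (Fin c)) :
    ((T ∩ S).card : ℤ) = ∑ i ∈ T, (if i ∈ S then (1:ℤ) else 0) := by
  rw [Finset.sum_boole, Finset.filter_mem_eq_inter]

lemma sum_ite_mem_const {c k : ℕ} (A B : Finset (Fin c)) (z : ℤ)
    (hAB : (A ∩ B).card = k) :
    (∑ i ∈ A, if i ∈ B then z else 0) = (k : ℤ) * z := by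
  rw [Finset.sum_ite, Finset.sum_const, Finset.sum_const, smul_zero, add_zero,
    Finset.filter_mem_eq_inter, hAB, nsmul_eq_mul]

lemma sum_card_mul_card {c r k x : ℕ} {A B : Finset (Fin c)}
    (hA : A.card = r) (hB : B.card = r) (hAB : (A ∩ B).card = k) :
    (∑ S ∈ Finset.powersetCard x (Finset.univ : Finset (Fin c)),
        ((A ∩ S).card : ℤ) * ((B ∩ S).card : ℤ))
      = (k : ℤ) * ch ((c:ℤ)-1) ((x:ℤ)-1)
        + ((r:ℤ)*r - k) * ch ((c:ℤ)-2) ((x:ℤ)-2) := by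
  set P := Finset.powersetCard x (Finset.univ : Finset (Fin c)) with hP
  set D1 := ch ((c:ℤ)-1) ((x:ℤ)-1) with hD1
  set D2 := ch ((c:ℤ)-2) ((x:ℤ)-2) with hD2
  have step1 : (∑ S ∈ P, ((A ∩ S).card : ℤ) * ((B ∩ S).card : ℤ))
      = ∑ i ∈ A, ∑ j ∈ B, ∑ S ∈ P,
          (if i ∈ S then (1:ℤ) else 0) * (if j ∈ S then 1 else 0) := by
    have expand : ∀ S ∈ P, ((A ∩ S).card : ℤ) * ((B ∩ S).card : ℤ)
        = ∑ i ∈ A, ∑ j ∈ B, (if i ∈ S then (1:ℤ) else 0) * (if j ∈ S then 1 else 0) := by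
      intro S _
      rw [card_inter_eq_sum, card_inter_eq_sum, Finset.sum_mul_sum]
    rw [Finset.sum_congr rfl expand, Finset.sum_comm]
    exact Finset.sum_congr rfl fun i _ => Finset.sum_comm
  have hval : ∀ i j : Fin c,
      (∑ S ∈ P, (if i ∈ S then (1:ℤ) else 0) * (if j ∈ S then 1 else 0))
      = if j = i then D1 else D2 := by
    intro i j
    have h1 : (∑ S ∈ P, (if i ∈ S then (1:ℤ) else 0) * (if j ∈ S then 1 else 0))
        = ((P.filter (fun S => ({i, j} : Finset (Fin c)) ⊆ S)).card : ℤ) := by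
      rw [← Finset.sum_boole]
      refine Finset.sum_congr rfl fun S _ => ?_
      by_cases hi : i ∈ S <;> by_cases hj : j ∈ S <;>
        simp [hi, hj, Finset.insert_subset_iff]
    rw [h1, hP, count_sup _ _ (Finset.subset_univ _)]
    by_cases h : j = i
    · subst h
      simp only [Finset.pair_eq_singleton, Finset.card_singleton, if_pos rfl]
      rw [hD1]
      norm_num [Finset.card_univ]
    · rw [if_neg h, Finset.card_pair fun hij => h hij.symm, hD2]
      norm_num [Finset.card_univ]
  rw [step1]
  have step2 : ∀ i : Fin c, (∑ j ∈ B, if j = i then D1 else D2)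
      = (r : ℤ) * D2 + (if i ∈ B then D1 - D2 else 0) := by
    intro i
    have : ∀ j ∈ B, (if j = i then D1 else D2) = D2 + (if j = i then D1 - D2 else 0) := by
      intro j _
      by_cases h : j = i <;> simp [h]
    rw [Finset.sum_congr rfl this, Finset.sum_add_distrib, Finset.sum_const, hB,
      Finset.sum_ite_eq' B i (fun _ => D1 - D2), nsmul_eq_mul]
  calc (∑ i ∈ A, ∑ j ∈ B, ∑ S ∈ P,
          (if i ∈ S then (1:ℤ) else 0) * (if j ∈ S then 1 else 0))
      = ∑ i ∈ A, ((r : ℤ) * D2 + (if i ∈ B then D1 - D2 else 0)) := by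
        refine Finset.sum_congr rfl fun i _ => ?_
        rw [Finset.sum_congr rfl fun j _ => hval i j, step2]
    _ = (k : ℤ) * D1 + ((r:ℤ)*r - k) * D2 := by
        rw [Finset.sum_add_distrib, Finset.sum_const, hA,
          sum_ite_mem_const A B (D1 - D2) hAB, nsmul_eq_mul]
        ring

lemma sum_card {c r x : ℕ} {A : Finset (Fin c)} (hA : A.card = r) :
    (∑ S ∈ Finset.powersetCard x (Finset.univ : Finset (Fin c)), ((A ∩ S).card : ℤ))
      = (r : ℤ) * ch ((c:ℤ)-1) ((x:ℤ)-1) := by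
  set P := Finset.powersetCard x (Finset.univ : Finset (Fin c)) with hP
  rw [Finset.sum_congr rfl fun S _ => card_inter_eq_sum A S, Finset.sum_comm]
  have hval : ∀ i : Fin c, (∑ S ∈ P, if i ∈ S then (1:ℤ) else 0)
      = ch ((c:ℤ)-1) ((x:ℤ)-1) := by
    intro i
    rw [Finset.sum_boole]
    have he : P.filter (fun S => i ∈ S)
        = P.filter (fun S => ({i} : Finset (Fin c)) ⊆ S) := by
      simp [Finset.singleton_subset_iff]
    rw [he, hP, count_sup _ _ (Finset.subset_univ _)]
    norm_num [Finset.card_univ]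
  rw [Finset.sum_congr rfl fun i _ => hval i, Finset.sum_const, hA, nsmul_eq_mul]

lemma sum_card_mul_empty {c r k x : ℕ} {A B : Finset (Fin c)}
    (hA : A.card = r) (hB : B.card = r) (hAB : (A ∩ B).card = k) :
    (∑ S ∈ Finset.powersetCard x (Finset.univ : Finset (Fin c)),
        ((A ∩ S).card : ℤ) * (if B ∩ S = ∅ then 1 else 0))
      = ((r : ℤ) - k) * ch ((c:ℤ)-r-1) ((x:ℤ)-1) := by
  classical
  set P := Finset.powersetCard x (Finset.univ : Finset (Fin c)) with hP
  set E := ch ((c:ℤ)-r-1) ((x:ℤ)-1) with hE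
  have expand : ∀ S ∈ P, ((A ∩ S).card : ℤ) * (if B ∩ S = ∅ then 1 else 0)
      = ∑ i ∈ A, (if i ∈ S ∧ B ∩ S = ∅ then (1:ℤ) else 0) := by
    intro S _
    rw [card_inter_eq_sum, Finset.sum_mul]
    refine Finset.sum_congr rfl fun i _ => ?_
    by_cases hi : i ∈ S <;> by_cases hb : B ∩ S = ∅ <;> simp [hi, hb]
  rw [Finset.sum_congr rfl expand, Finset.sum_comm]
  have hval : ∀ i ∈ A, (∑ S ∈ P, if i ∈ S ∧ B ∩ S = ∅ then (1:ℤ) else 0)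
      = if i ∈ B then 0 else E := by
    intro i _
    rw [Finset.sum_boole]
    by_cases hi : i ∈ B
    · rw [if_pos hi]
      norm_num
      intro S _ hS1 hS2
      exact (Finset.eq_empty_iff_forall_notMem.1 hS2 i) (Finset.mem_inter.2 ⟨hi, hS1⟩)
    · rw [if_neg hi, hP, count_mem_disj i B x hi, hE, hB]
      norm_num [Fintype.card_fin]
  rw [Finset.sum_congr rfl hval]
  have : ∀ i ∈ A, (if i ∈ B then (0:ℤ) else E) = E - (if i ∈ B then E else 0) := by
    intro i _; by_cases h : i ∈ B <;> simp [h]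
  rw [Finset.sum_congr rfl this, Finset.sum_sub_distrib, Finset.sum_const, hA,
    Finset.sum_ite, Finset.sum_const, Finset.sum_const, smul_zero, add_zero,
    Finset.filter_mem_eq_inter, hAB, nsmul_eq_mul, nsmul_eq_mul]
  ring

lemma sum_empty_ind {c x : ℕ} (T : Finset (Fin c)) :
    (∑ S ∈ Finset.powersetCard x (Finset.univ : Finset (Fin c)),
        (if T ∩ S = ∅ then (1:ℤ) else 0))
      = ch ((c:ℤ) - T.card) (x : ℤ) := by
  rw [Finset.sum_boole, count_disj T x, Fintype.card_fin]

lemma sum_one {c x : ℕ} :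
    (∑ _S ∈ Finset.powersetCard x (Finset.univ : Finset (Fin c)), (1:ℤ))
    = ch (c:ℤ) (x:ℤ) := by
  rw [Finset.sum_const, Finset.card_powersetCard, Finset.card_univ, Fintype.card_fin,
    nsmul_eq_mul, mul_one, ch_natCast]

lemma key_sum {c r k x : ℕ} (A B : Finset (Fin c))
    (hA : A.card = r) (hB : B.card = r) (hAB : (A ∩ B).card = k) :
    (∑ S ∈ Finset.powersetCard x (Finset.univ : Finset (Fin c)),
        (((A ∩ S).card - 1 : ℕ) : ℤ) * (((B ∩ S).card - 1 : ℕ) : ℤ))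
      = (k : ℤ) * ch ((c:ℤ)-1) ((x:ℤ)-1) + ((r:ℤ)*r - k) * ch ((c:ℤ)-2) ((x:ℤ)-2)
        - 2*(r:ℤ) * ch ((c:ℤ)-1) ((x:ℤ)-1) + 2*((r:ℤ)-k) * ch ((c:ℤ)-r-1) ((x:ℤ)-1)
        + ch (c:ℤ) (x:ℤ) - 2 * ch ((c:ℤ)-r) (x:ℤ)
        + ch ((c:ℤ)-2*(r:ℤ)+(k:ℤ)) (x:ℤ) := by
  classical
  set P := Finset.powersetCard x (Finset.univ : Finset (Fin c)) with hP
  have hBA : (B ∩ A).card = k := by rw [Finset.inter_comm]; exact hAB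
  have hterm : ∀ S ∈ P, (((A ∩ S).card - 1 : ℕ) : ℤ) * (((B ∩ S).card - 1 : ℕ) : ℤ)
      = ((A ∩ S).card : ℤ) * ((B ∩ S).card : ℤ)
        - ((A ∩ S).card : ℤ) - ((B ∩ S).card : ℤ) + 1
        + ((A ∩ S).card : ℤ) * (if B ∩ S = ∅ then 1 else 0)
        + ((B ∩ S).card : ℤ) * (if A ∩ S = ∅ then 1 else 0)
        - (if A ∩ S = ∅ then (1:ℤ) else 0) - (if B ∩ S = ∅ then (1:ℤ) else 0)
        + (if A ∩ S = ∅ then (1:ℤ) else 0) * (if B ∩ S = ∅ then 1 else 0) := by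
    intro S _
    by_cases ha : A ∩ S = ∅ <;> by_cases hb : B ∩ S = ∅
    · simp [ha, hb]
    · have h2 : 1 ≤ (B ∩ S).card :=
        Finset.card_pos.2 (Finset.nonempty_iff_ne_empty.2 hb)
      simp only [ha, hb, Finset.card_empty, if_pos rfl, if_neg hb, Nat.cast_zero,
        Nat.zero_sub, Nat.cast_zero]
      push_cast
      ring
    · have h1 : 1 ≤ (A ∩ S).card :=
        Finset.card_pos.2 (Finset.nonempty_iff_ne_empty.2 ha)
      simp only [ha, hb, Finset.card_empty, if_pos rfl, if_neg ha, Nat.cast_zero,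
        Nat.zero_sub, Nat.cast_zero]
      push_cast
      ring
    · have h1 : 1 ≤ (A ∩ S).card :=
        Finset.card_pos.2 (Finset.nonempty_iff_ne_empty.2 ha)
      have h2 : 1 ≤ (B ∩ S).card :=
        Finset.card_pos.2 (Finset.nonempty_iff_ne_empty.2 hb)
      rw [if_neg ha, if_neg hb, Nat.cast_sub h1, Nat.cast_sub h2]
      push_cast
      ring
  rw [Finset.sum_congr rfl hterm]
  simp only [Finset.sum_add_distrib, Finset.sum_sub_distrib]
  rw [sum_card_mul_card hA hB hAB, sum_card hA, sum_card hB, sum_one,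
    sum_card_mul_empty hA hB hAB, sum_card_mul_empty hB hA hBA]
  have hzz : ∀ S ∈ P, (if A ∩ S = ∅ then (1:ℤ) else 0) * (if B ∩ S = ∅ then 1 else 0)
      = (if (A ∪ B) ∩ S = ∅ then (1:ℤ) else 0) := by
    intro S _
    rw [Finset.union_inter_distrib_right]
    by_cases ha : A ∩ S = ∅ <;> by_cases hb : B ∩ S = ∅ <;>
      simp [ha, hb, Finset.union_eq_empty]
  rw [Finset.sum_congr rfl hzz, sum_empty_ind A, sum_empty_ind B, sum_empty_ind (A ∪ B),
    hA, hB]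
  have hcu : ((A ∪ B).card : ℤ) = 2*(r:ℤ) - k := by
    have := Finset.card_union_add_card_inter A B
    rw [hA, hB, hAB] at this
    omega
  rw [hcu, show (c:ℤ) - (2*(r:ℤ) - (k:ℤ)) = (c:ℤ)-2*(r:ℤ)+(k:ℤ) from by ring]
  ring

/-- Recursion for `g(m,x)`: if jobs on server-sets `A,B` (each of size `r`)
share exactly `m` servers and jobs on server-sets `A',B'` share exactly `m+1`
servers, then the difference of the corresponding pairwise sums is
`C(c-2,x-1) - 2·C(c-r-1,x-1) + C(c-2r+m,x-1)`. -/
theorem g_succ_sub_g (c r m x : ℕ) (hm : m + 1 ≤ r)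
    (A B A' B' : Finset (Fin c))
    (hA : A.card = r) (hB : B.card = r) (hA' : A'.card = r) (hB' : B'.card = r)
    (hAB : (A ∩ B).card = m) (hAB' : (A' ∩ B').card = m + 1) :
    (∑ S ∈ Finset.powersetCard x (Finset.univ : Finset (Fin c)),
        (((A' ∩ S).card - 1 : ℕ) : ℤ) * (((B' ∩ S).card - 1 : ℕ) : ℤ))
      - (∑ S ∈ Finset.powersetCard x (Finset.univ : Finset (Fin c)),
        (((A ∩ S).card - 1 : ℕ) : ℤ) * (((B ∩ S).card - 1 : ℕ) : ℤ))
      = ch ((c : ℤ) - 2) ((x : ℤ) - 1)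
        - 2 * ch ((c : ℤ) - r - 1) ((x : ℤ) - 1)
        + ch ((c : ℤ) - 2 * r + m) ((x : ℤ) - 1) := by
  have hcard := Finset.card_union_add_card_inter A B
  rw [hA, hB, hAB] at hcard
  have hle : (A ∪ B).card ≤ c := le_trans (Finset.card_le_univ _) (by simp)
  -- basic inequalities
  have hc2 : (0:ℤ) ≤ (c:ℤ) - 2 := by omega
  have hcm : (0:ℤ) ≤ (c:ℤ) - 2*(r:ℤ) + m := by omega
  rw [key_sum A B hA hB hAB, key_sum A' B' hA' hB' hAB']
  simp only [Nat.cast_add, Nat.cast_one]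
  have h5 := ch_pascal ((c:ℤ)-2) ((x:ℤ)-2) hc2
  rw [show ((c:ℤ)-2)+1 = (c:ℤ)-1 by ring, show ((x:ℤ)-2)+1 = (x:ℤ)-1 by ring] at h5
  have h6 := ch_pascal ((c:ℤ)-2*(r:ℤ)+(m:ℤ)) ((x:ℤ)-1) hcm
  rw [show ((x:ℤ)-1)+1 = (x:ℤ) by ring] at h6
  rw [show (c:ℤ)-2*(r:ℤ)+((m:ℤ)+1) = ((c:ℤ)-2*(r:ℤ)+(m:ℤ))+1 from by ring, h6, h5]
  ring
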